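/- arXiv:1003.0564 — 2 statements merged into one kernel-verified Lean document; each statement's English description precedes it below -/
import Mathlib

section
/- Let A be an n×n generalized Cartan matrix whose Dynkin diagram graph is acyclic (contains no cycle). Then A is symmetrizable. -/
/-- An integer matrix is a generalized Cartan matrix (GCM). -/
def IsGCM {ι : Type} (A : Matrix ι ι ℤ) : Prop :=
  (∀ i, A i i = 2) ∧ (∀ i j, i ≠ j → A i j ≤ 0) ∧ (∀ i j, A i j = 0 → A j i = 0)

/-- A GCM is symmetrizable if there are nonzero rationals `d i` with
`d i * A i j = d j * A j i` for all `i, j`. -/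
def IsSymmetrizable {ι : Type} (A : Matrix ι ι ℤ) : Prop :=
  ∃ d : ι → ℚ, (∀ i, d i ≠ 0) ∧ ∀ i j, d i * (A i j : ℚ) = d j * (A j i : ℚ)

/-- The Dynkin diagram graph of a GCM: `i` adjacent to `j` iff `i ≠ j` and `A i j ≠ 0`.
(For a GCM, `A i j ≠ 0 ↔ A j i ≠ 0`, so adjacency is stated symmetrically.) -/
def dynkinGraph {ι : Type} (A : Matrix ι ι ℤ) : SimpleGraph ι where
  Adj i j := i ≠ j ∧ A i j ≠ 0 ∧ A j i ≠ 0
  symm := by constructor; intro i j h; exact ⟨h.1.symm, h.2.2, h.2.1⟩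
  loopless := by constructor; intro i h; exact h.1 rfl

private lemma exists_leaf {n : ℕ} (A : Matrix (Fin (n+1)) (Fin (n+1)) ℤ)
    (hacyclic : ∀ (m : ℕ) (i : Fin (m + 3) → Fin (n+1)), Function.Injective i →
      ¬ (∀ s, (dynkinGraph A).Adj (i s) (i (s + 1)))) :
    ∃ v : Fin (n+1), ∀ w w', (dynkinGraph A).Adj v w → (dynkinGraph A).Adj v w' → w = w' := by
  classical
  set G := dynkinGraph A with hG
  set P : ℕ → Prop := fun k => ∃ f : ℕ → Fin (n+1),
    (∀ a b, a ≤ k → b ≤ k → f a = f b → a = b) ∧ ∀ s, s < k → G.Adj (f s) (f (s+1)) with hP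
  have h0 : P 0 := ⟨fun _ => 0, by omega, by omega⟩
  have hbound : ∀ k, P k → k ≤ n := by
    rintro k ⟨f, hinj, -⟩
    have : Fintype.card (Fin (k+1)) ≤ Fintype.card (Fin (n+1)) :=
      Fintype.card_le_of_injective (fun s => f s.val)
        (fun a b h => Fin.ext (hinj a.val b.val (Nat.lt_succ_iff.mp a.isLt)
          (Nat.lt_succ_iff.mp b.isLt) h))
    simpa using this
  set k := Nat.findGreatest P n with hk'
  have hk : P k := Nat.findGreatest_spec (Nat.zero_le n) h0
  have hmax : ∀ j, P j → j ≤ k := fun j hj => Nat.le_findGreatest (hbound j hj) hj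
  clear_value k
  obtain ⟨f, hinj, hadj⟩ := hk
  refine ⟨f k, ?_⟩
  have claim : ∀ w, G.Adj (f k) w → (k ≠ 0 ∧ w = f (k-1)) := by
    intro w hw
    have hwne : w ≠ f k := fun h => hw.1 h.symm
    by_cases hex : ∃ t, t ≤ k ∧ f t = w
    · obtain ⟨t, htk, hft⟩ := hex
      have htne : t ≠ k := fun h => hwne (h ▸ hft.symm)
      by_cases ht1 : t = k - 1
      · exact ⟨by omega, by rw [← hft, ht1]⟩
      · exfalso
        have ht2 : t + 2 ≤ k := by omega
        obtain ⟨m, hmk⟩ : ∃ m, t + (m + 2) = k := ⟨k - t - 2, by omega⟩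
        refine hacyclic m (fun s => f (t + s.val)) ?_ ?_
        · intro s s' h
          have := hinj (t + s.val) (t + s'.val) (by omega) (by omega) h
          exact Fin.ext (by omega)
        · intro s
          rcases Nat.lt_or_ge s.val (m+2) with hs | hs
          · have hsv : ((s + 1 : Fin (m+3))).val = s.val + 1 := by
              have : (s.val + 1) % (m + 3) = s.val + 1 := Nat.mod_eq_of_lt (by omega)
              simp [Fin.add_def, this]
            show G.Adj (f (t + s.val)) (f (t + ((s+1) : Fin (m+3)).val))
            rw [hsv]
            have h3 : t + s.val < k := by omega
            have := hadj (t + s.val) h3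
            simpa [Nat.add_assoc] using this
          · have hsv : s.val = m + 2 := by omega
            have hsv1 : ((s + 1 : Fin (m+3))).val = 0 := by
              have : (s.val + 1) % (m + 3) = 0 := by rw [hsv]; simp
              simp [Fin.add_def, this]
            show G.Adj (f (t + s.val)) (f (t + ((s+1) : Fin (m+3)).val))
            rw [hsv1, hsv]
            have e1 : f (t + (m + 2)) = f k := congrArg f hmk
            have e2 : f (t + 0) = w := hft
            rw [e1, e2]
            exact hw
    · push_neg at hex
      have : P (k+1) := by
        refine ⟨fun a => if a = k+1 then w else f a, ?_, ?_⟩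
        · intro a b ha hb h
          rcases eq_or_ne a (k+1) with rfl | ha' <;> rcases eq_or_ne b (k+1) with rfl | hb'
          · rfl
          · simp only [if_pos rfl, if_neg hb'] at h
            exact absurd h.symm (hex b (by omega))
          · simp only [if_pos rfl, if_neg ha'] at h
            exact absurd h (hex a (by omega))
          · simp only [if_neg ha', if_neg hb'] at h
            exact hinj a b (by omega) (by omega) h
        · intro s hs
          rcases Nat.lt_or_ge s k with hsk | hsk
          · have h1 : s ≠ k + 1 := by omega
            have h2 : s + 1 ≠ k + 1 := by omega
            simpa [h1, h2, hsk.ne] using hadj s hsk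
          · have hsk' : s = k := by omega
            have h1 : s ≠ k + 1 := by omega
            have h2 : s + 1 = k + 1 := by omega
            simp only [if_neg h1, if_pos h2]
            rw [hsk']
            exact hw
      have := hmax (k+1) this
      omega
  intro w w' hw hw'
  obtain ⟨-, h1⟩ := claim w hw
  obtain ⟨-, h2⟩ := claim w' hw'
  rw [h1, h2]

private lemma symm_aux : ∀ (n : ℕ) (A : Matrix (Fin n) (Fin n) ℤ), IsGCM A →
    (∀ (m : ℕ) (i : Fin (m + 3) → Fin n), Function.Injective i →
      ¬ (∀ s, (dynkinGraph A).Adj (i s) (i (s + 1)))) →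
    IsSymmetrizable A := by
  intro n
  induction n with
  | zero => exact fun A _ _ => ⟨fun _ => 1, fun i => one_ne_zero, fun i => i.elim0⟩
  | succ m IH =>
    intro A hA hacyclic
    classical
    obtain ⟨v, hv⟩ := exists_leaf A hacyclic
    set B : Matrix (Fin m) (Fin m) ℤ :=
      fun i j => A (v.succAbove i) (v.succAbove j) with hBdef
    have hB : IsGCM B :=
      ⟨fun i => hA.1 _,
       fun i j hij => hA.2.1 _ _ (fun h => hij (Fin.succAbove_right_injective h)),
       fun i j h => hA.2.2 _ _ h⟩
    have hBac : ∀ (m' : ℕ) (i : Fin (m' + 3) → Fin m), Function.Injective i →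
        ¬ (∀ s, (dynkinGraph B).Adj (i s) (i (s + 1))) := by
      intro m' i hi hadj
      refine hacyclic m' (fun s => v.succAbove (i s))
        (fun a b h => hi (Fin.succAbove_right_injective h)) ?_
      intro s
      obtain ⟨hne, h1, h2⟩ := hadj s
      exact ⟨fun h => hne (Fin.succAbove_right_injective h), h1, h2⟩
    obtain ⟨d', hd'0, hd'⟩ := IH B hB hBac
    -- zero lemma for non-adjacent distinct pairs
    have zz : ∀ i j : Fin (m+1), i ≠ j → ¬ (dynkinGraph A).Adj i j →
        A i j = 0 ∧ A j i = 0 := by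
      intro i j hij hnadj
      by_cases h : A i j = 0
      · exact ⟨h, hA.2.2 _ _ h⟩
      · by_cases h' : A j i = 0
        · exact ⟨hA.2.2 _ _ h', h'⟩
        · exact absurd ⟨hij, h, h'⟩ hnadj
    -- choose the value c at v
    by_cases hex : ∃ u, (dynkinGraph A).Adj v u
    · obtain ⟨u, hu⟩ := hex
      obtain ⟨u₀, hu₀⟩ := Fin.exists_succAbove_eq (Ne.symm hu.1)
      have hAvu : (A v u : ℚ) ≠ 0 := by exact_mod_cast hu.2.1
      have hAuv : (A u v : ℚ) ≠ 0 := by exact_mod_cast hu.2.2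
      set c : ℚ := d' u₀ * (A u v : ℚ) / (A v u : ℚ) with hc
      have hc0 : c ≠ 0 := div_ne_zero (mul_ne_zero (hd'0 u₀) hAuv) hAvu
      set d : Fin (m+1) → ℚ := v.insertNth c d' with hd
      have hdv : d v = c := by simp [hd]
      have hds : ∀ j₀, d (v.succAbove j₀) = d' j₀ := by
        intro j₀; simp [hd]
      have key : ∀ j, j ≠ v → d v * (A v j : ℚ) = d j * (A j v : ℚ) := by
        intro j hj
        by_cases hadj : (dynkinGraph A).Adj v j
        · have huj : u = j := hv u j hu hadj
          subst huj
          rw [hdv, ← hu₀, hds, hu₀, hc, div_mul_cancel₀ _ hAvu]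
        · obtain ⟨h1, h2⟩ := zz v j (Ne.symm hj) hadj
          rw [h1, h2]
          push_cast
          ring
      refine ⟨d, ?_, ?_⟩
      · intro i
        rcases eq_or_ne i v with rfl | hi
        · rw [hdv]; exact hc0
        · obtain ⟨i₀, rfl⟩ := Fin.exists_succAbove_eq hi
          rw [hds]; exact hd'0 i₀
      · intro i j
        rcases eq_or_ne i j with rfl | hij
        · rfl
        rcases eq_or_ne i v with rfl | hi
        · exact key j (Ne.symm hij)
        rcases eq_or_ne j v with rfl | hj
        · exact (key i hi).symm
        obtain ⟨i₀, rfl⟩ := Fin.exists_succAbove_eq hi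
        obtain ⟨j₀, rfl⟩ := Fin.exists_succAbove_eq hj
        rw [hds, hds]
        exact hd' i₀ j₀
    · push_neg at hex
      set d : Fin (m+1) → ℚ := v.insertNth 1 d' with hd
      have hdv : d v = 1 := by simp [hd]
      have hds : ∀ j₀, d (v.succAbove j₀) = d' j₀ := by
        intro j₀; simp [hd]
      have key : ∀ j, j ≠ v → d v * (A v j : ℚ) = d j * (A j v : ℚ) := by
        intro j hj
        obtain ⟨h1, h2⟩ := zz v j (Ne.symm hj) (hex j)
        rw [h1, h2]
        push_cast
        ring
      refine ⟨d, ?_, ?_⟩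
      · intro i
        rcases eq_or_ne i v with rfl | hi
        · rw [hdv]; exact one_ne_zero
        · obtain ⟨i₀, rfl⟩ := Fin.exists_succAbove_eq hi
          rw [hds]; exact hd'0 i₀
      · intro i j
        rcases eq_or_ne i j with rfl | hij
        · rfl
        rcases eq_or_ne i v with rfl | hi
        · exact key j (Ne.symm hij)
        rcases eq_or_ne j v with rfl | hj
        · exact (key i hi).symm
        obtain ⟨i₀, rfl⟩ := Fin.exists_succAbove_eq hi
        obtain ⟨j₀, rfl⟩ := Fin.exists_succAbove_eq hj
        rw [hds, hds]
        exact hd' i₀ j₀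

/-- A GCM whose Dynkin diagram graph is acyclic (contains no cycle, i.e. no sequence of
`k = m + 3 ≥ 3` distinct vertices cyclically consecutive-adjacent) is symmetrizable. -/
theorem acyclic_implies_symmetrizable {n : ℕ} (A : Matrix (Fin n) (Fin n) ℤ)
    (hA : IsGCM A)
    (hacyclic : ∀ (m : ℕ) (i : Fin (m + 3) → Fin n), Function.Injective i →
      ¬ (∀ s, (dynkinGraph A).Adj (i s) (i (s + 1)))) :
    IsSymmetrizable A :=
  symm_aux n A hA hacyclic
end

section
/- Let A be a symmetrizable hyperbolic generalized Cartan matrix of rank n ≥ 3. Then A contains a proper indecomposable 2×2 principal submatrix of affine type (equal, up to reordering of its two indices, to [[2,−2],[−2,2]] or [[2,−1],[−4,2]]; equivalently, there exist i ≠ j with A i j · A j i = 4) if and only if n = 3 and A is of noncompact hyperbolic type. -/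
/-- The principal submatrix of `A` with rows and columns in `S`. -/
def matSub {ι : Type} (A : Matrix ι ι ℤ) (S : Finset ι) : Matrix S S ℤ :=
  fun i j => A i.1 j.1

/-- A GCM is of finite type if all of its principal minors are positive. -/
def IsFiniteType {ι : Type} [Fintype ι] [DecidableEq ι] (A : Matrix ι ι ℤ) : Prop :=
  ∀ S : Finset ι, 0 < (matSub A S).det

/-- An indecomposable GCM is of affine type if its determinant is `0` and all proper
principal minors are positive (i.e. every proper principal submatrix is of finite type). -/
def IsAffineType {ι : Type} [Fintype ι] [DecidableEq ι] (A : Matrix ι ι ℤ) : Prop :=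
  (dynkinGraph A).Connected ∧ A.det = 0 ∧
    ∀ S : Finset ι, S ≠ Finset.univ → 0 < (matSub A S).det

/-- An indecomposable GCM of rank at least 3 is hyperbolic if it is of neither finite nor
affine type, but every proper connected principal submatrix is of finite or affine type. -/
def IsHyperbolic {ι : Type} [Fintype ι] [DecidableEq ι] (A : Matrix ι ι ℤ) : Prop :=
  3 ≤ Fintype.card ι ∧ (dynkinGraph A).Connected ∧
  ¬ IsFiniteType A ∧ ¬ IsAffineType A ∧
  ∀ S : Finset ι, S ≠ Finset.univ →
    ((dynkinGraph A).induce (S : Set ι)).Connected →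
    (IsFiniteType (matSub A S) ∨ IsAffineType (matSub A S))

/-- A hyperbolic GCM is of compact hyperbolic type if every proper connected principal
submatrix is of finite type. -/
def IsCompactHyperbolic {ι : Type} [Fintype ι] [DecidableEq ι] (A : Matrix ι ι ℤ) : Prop :=
  IsHyperbolic A ∧ ∀ S : Finset ι, S ≠ Finset.univ →
    ((dynkinGraph A).induce (S : Set ι)).Connected → IsFiniteType (matSub A S)

lemma det_matSub_pair {κ : Type} [DecidableEq κ] (M : Matrix κ κ ℤ) (a b : κ) (hab : a ≠ b) :
    (matSub M {a, b}).det = M a a * M b b - M a b * M b a := by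
  have ha : a ∈ ({a, b} : Finset κ) := by simp
  have hb : b ∈ ({a, b} : Finset κ) := by simp
  let e : Fin 2 ≃ ({a, b} : Finset κ) :=
    { toFun := fun x => if x = 0 then ⟨a, ha⟩ else ⟨b, hb⟩
      invFun := fun y => if y.1 = a then 0 else 1
      left_inv := by
        intro x; fin_cases x <;> simp [hab.symm]
      right_inv := by
        rintro ⟨y, hy⟩
        rcases Finset.mem_insert.mp hy with h | h
        · subst h; simp
        · have h' : y = b := Finset.mem_singleton.mp h
          subst h'
          simp [hab.symm] }
  rw [← Matrix.det_submatrix_equiv_self e, Matrix.det_fin_two]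
  simp [matSub, e, Matrix.submatrix]

lemma det_matSub_singleton {κ : Type} [DecidableEq κ] (M : Matrix κ κ ℤ) (a : κ) :
    (matSub M {a}).det = M a a := by
  have ha : a ∈ ({a} : Finset κ) := by simp
  let e : Fin 1 ≃ ({a} : Finset κ) :=
    { toFun := fun _ => ⟨a, ha⟩
      invFun := fun _ => 0
      left_inv := by intro x; fin_cases x; rfl
      right_inv := by rintro ⟨y, hy⟩; have : y = a := Finset.mem_singleton.mp hy; subst this; rfl }
  rw [← Matrix.det_submatrix_equiv_self e, Matrix.det_fin_one]
  simp [matSub, e, Matrix.submatrix]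

lemma walk_boundary {V : Type} {G : SimpleGraph V} (S : Set V) :
    ∀ {u v : V}, G.Walk u v → u ∈ S → v ∉ S → ∃ a b, a ∈ S ∧ b ∉ S ∧ G.Adj a b := by
  intro u v w
  induction w with
  | nil => intro h1 h2; exact absurd h1 h2
  | @cons u x v h p ih =>
    intro h1 h2
    by_cases hx : x ∈ S
    · exact ih hx h2
    · exact ⟨u, x, h1, hx, h⟩

lemma induce_pair_connected {V : Type} (G : SimpleGraph V) (i j : V) (hij : G.Adj i j) :
    (G.induce ({i, j} : Set V)).Connected := by
  have hi : i ∈ ({i, j} : Set V) := by simp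
  have hj : j ∈ ({i, j} : Set V) := by simp
  have hadj : (G.induce ({i, j} : Set V)).Adj ⟨i, hi⟩ ⟨j, hj⟩ := hij
  have key : ∀ z (hz : z ∈ ({i, j} : Set V)),
      (G.induce ({i, j} : Set V)).Reachable ⟨z, hz⟩ ⟨i, hi⟩ := by
    intro z hz
    have hz' := hz
    simp only [Set.mem_insert_iff, Set.mem_singleton_iff] at hz'
    rcases hz' with rfl | rfl
    · exact SimpleGraph.Reachable.refl _
    · exact hadj.symm.reachable
  refine ⟨?_⟩
  rintro ⟨x, hx⟩ ⟨y, hy⟩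
  exact (key x hx).trans (key y hy).symm

lemma induce_triple_connected {V : Type} (G : SimpleGraph V) (i j k : V)
    (hij : G.Adj i j) (hk : G.Adj i k ∨ G.Adj j k) :
    (G.induce ({i, j, k} : Set V)).Connected := by
  have hi : i ∈ ({i, j, k} : Set V) := by simp
  have hj : j ∈ ({i, j, k} : Set V) := by simp
  have hkk : k ∈ ({i, j, k} : Set V) := by simp
  have hadj : (G.induce ({i, j, k} : Set V)).Adj ⟨i, hi⟩ ⟨j, hj⟩ := hij
  have hreachk : (G.induce ({i, j, k} : Set V)).Reachable ⟨k, hkk⟩ ⟨i, hi⟩ := by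
    rcases hk with h | h
    · exact (SimpleGraph.Adj.reachable
        (show (G.induce ({i, j, k} : Set V)).Adj ⟨i, hi⟩ ⟨k, hkk⟩ from h)).symm
    · exact ((SimpleGraph.Adj.reachable
        (show (G.induce ({i, j, k} : Set V)).Adj ⟨j, hj⟩ ⟨k, hkk⟩ from h)).symm).trans
        hadj.symm.reachable
  have key : ∀ z (hz : z ∈ ({i, j, k} : Set V)),
      (G.induce ({i, j, k} : Set V)).Reachable ⟨z, hz⟩ ⟨i, hi⟩ := by
    intro z hz
    have hz' := hz
    simp only [Set.mem_insert_iff, Set.mem_singleton_iff] at hz'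
    rcases hz' with rfl | rfl | rfl
    · exact SimpleGraph.Reachable.refl _
    · exact hadj.symm.reachable
    · exact hreachk
  refine ⟨?_⟩
  rintro ⟨x, hx⟩ ⟨y, hy⟩
  exact (key x hx).trans (key y hy).symm


/-- A symmetrizable hyperbolic GCM contains a proper indecomposable `2 × 2` principal
submatrix of affine type (equivalently, `A i j * A j i = 4` for some `i ≠ j`) iff its rank
is `3` and it is of noncompact hyperbolic type. -/
theorem affine_two_by_two_iff_rank_three_noncompact {n : ℕ}
    (A : Matrix (Fin n) (Fin n) ℤ) (hA : IsGCM A) (hsym : IsSymmetrizable A)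
    (hhyp : IsHyperbolic A) :
    (∃ i j, i ≠ j ∧ A i j * A j i = 4) ↔ (n = 3 ∧ ¬ IsCompactHyperbolic A) := by
  obtain ⟨hd, _, _⟩ := hA
  have hn3 : 3 ≤ n := by simpa using hhyp.1
  constructor
  · rintro ⟨i, j, hij, h4⟩
    have hAij : A i j ≠ 0 := by intro h; rw [h] at h4; simp at h4
    have hAji : A j i ≠ 0 := by intro h; rw [h] at h4; simp at h4
    have hadj : (dynkinGraph A).Adj i j := ⟨hij, hAij, hAji⟩
    -- key determinant fact for the pair {i, j} (in any ambient principal submatrix)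
    have hneq : n = 3 := by
      by_contra hne
      have hn4 : 4 ≤ n := by omega
      -- find k outside {i, j} adjacent to i or j
      have hiv : i ∈ ({i, j} : Set (Fin n)) := by simp
      obtain ⟨v, hv⟩ : ∃ v : Fin n, v ∉ ({i, j} : Set (Fin n)) := by
        by_contra hall
        push_neg at hall
        have hsub : (Finset.univ : Finset (Fin n)) ⊆ {i, j} := by
          intro x _
          have := hall x
          simp only [Set.mem_insert_iff, Set.mem_singleton_iff] at this
          simp [this]
        have h1 : (Finset.univ : Finset (Fin n)).card ≤ ({i, j} : Finset (Fin n)).card :=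
          Finset.card_le_card hsub
        have h2 : ({i, j} : Finset (Fin n)).card ≤ 2 :=
          (Finset.card_insert_le _ _).trans (by simp)
        simp only [Finset.card_univ, Fintype.card_fin] at h1
        omega
      obtain ⟨w⟩ := hhyp.2.1.preconnected i v
      obtain ⟨a, b, haS, hbS, hab⟩ := walk_boundary ({i, j} : Set (Fin n)) w hiv hv
      have hbi : b ≠ i := by intro h; subst h; simp at hbS
      have hbj : b ≠ j := by intro h; subst h; simp at hbS
      have hk : (dynkinGraph A).Adj i b ∨ (dynkinGraph A).Adj j b := by
        simp only [Set.mem_insert_iff, Set.mem_singleton_iff] at haS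
        rcases haS with rfl | rfl
        · exact Or.inl hab
        · exact Or.inr hab
      set T : Finset (Fin n) := {i, j, b} with hT
      have hiT : i ∈ T := by simp [hT]
      have hjT : j ∈ T := by simp [hT]
      have hbT : b ∈ T := by simp [hT]
      have hTset : (↑T : Set (Fin n)) = ({i, j, b} : Set (Fin n)) := by simp [hT]
      have hTne : T ≠ Finset.univ := by
        intro h
        have h1 : T.card ≤ 3 := by
          rw [hT]
          refine (Finset.card_insert_le _ _).trans ?_
          have h2 := Finset.card_insert_le j ({b} : Finset (Fin n))
          simp only [Finset.card_singleton] at h2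
          omega
        rw [h, Finset.card_univ, Fintype.card_fin] at h1
        omega
      have hTcon : ((dynkinGraph A).induce (↑T : Set (Fin n))).Connected := by
        rw [hTset]
        exact induce_triple_connected _ i j b hadj hk
      have hij' : (⟨i, hiT⟩ : {x // x ∈ T}) ≠ ⟨j, hjT⟩ := by
        intro h; exact hij (congrArg Subtype.val h)
      have hdet : (matSub (matSub A T) {⟨i, hiT⟩, ⟨j, hjT⟩}).det = 0 := by
        rw [det_matSub_pair _ _ _ hij']
        show A i i * A j j - A i j * A j i = 0
        rw [hd i, hd j, h4]; ring
      rcases hhyp.2.2.2.2 T hTne hTcon with hf | haf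
      · have := hf {⟨i, hiT⟩, ⟨j, hjT⟩}
        rw [hdet] at this
        exact lt_irrefl 0 this
      · have hSne : ({⟨i, hiT⟩, ⟨j, hjT⟩} : Finset {x // x ∈ T}) ≠ Finset.univ := by
          intro h
          have : (⟨b, hbT⟩ : {x // x ∈ T}) ∈ ({⟨i, hiT⟩, ⟨j, hjT⟩} : Finset {x // x ∈ T}) := by
            rw [h]; exact Finset.mem_univ _
          simp only [Finset.mem_insert, Finset.mem_singleton, Subtype.mk.injEq] at this
          rcases this with h' | h'
          · exact hbi h'
          · exact hbj h'
        have := haf.2.2 _ hSne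
        rw [hdet] at this
        exact lt_irrefl 0 this
    refine ⟨hneq, ?_⟩
    intro hcomp
    have hSne : ({i, j} : Finset (Fin n)) ≠ Finset.univ := by
      intro h
      have h1 : ({i, j} : Finset (Fin n)).card ≤ 2 :=
        (Finset.card_insert_le _ _).trans (by simp)
      rw [h, Finset.card_univ, Fintype.card_fin] at h1
      omega
    have hScon : ((dynkinGraph A).induce (↑({i, j} : Finset (Fin n)) : Set (Fin n))).Connected := by
      have : (↑({i, j} : Finset (Fin n)) : Set (Fin n)) = ({i, j} : Set (Fin n)) := by simp
      rw [this]
      exact induce_pair_connected _ i j hadj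
    have hfin := hcomp.2 _ hSne hScon
    have hiS : i ∈ ({i, j} : Finset (Fin n)) := by simp
    have hjS : j ∈ ({i, j} : Finset (Fin n)) := by simp
    have hij' : (⟨i, hiS⟩ : {x // x ∈ ({i, j} : Finset (Fin n))}) ≠ ⟨j, hjS⟩ := by
      intro h; exact hij (congrArg Subtype.val h)
    have := hfin {⟨i, hiS⟩, ⟨j, hjS⟩}
    rw [det_matSub_pair _ _ _ hij'] at this
    have h0 : A i i * A j j - A i j * A j i = 0 := by rw [hd i, hd j, h4]; ring
    rw [show (matSub A {i, j}) ⟨i, hiS⟩ ⟨i, hiS⟩ * (matSub A {i, j}) ⟨j, hjS⟩ ⟨j, hjS⟩ -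
      (matSub A {i, j}) ⟨i, hiS⟩ ⟨j, hjS⟩ * (matSub A {i, j}) ⟨j, hjS⟩ ⟨i, hiS⟩ =
      A i i * A j j - A i j * A j i from rfl, h0] at this
    exact lt_irrefl 0 this
  · rintro ⟨rfl, hnc⟩
    rw [IsCompactHyperbolic] at hnc
    push_neg at hnc
    obtain ⟨S, hSne, hScon, hSnf⟩ := hnc hhyp
    have haff := (hhyp.2.2.2.2 S hSne hScon).resolve_left hSnf
    obtain ⟨⟨a0, ha0⟩⟩ := hScon.nonempty
    have ha0' : a0 ∈ S := ha0
    have hcard3 : S.card < 3 := by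
      have h1 : S.card ≤ 3 := by
        have := Finset.card_le_card (Finset.subset_univ S)
        simpa using this
      rcases lt_or_eq_of_le h1 with h | h
      · exact h
      · exfalso
        apply hSne
        apply Finset.eq_univ_of_card
        simp [h]
    have hcard1 : 1 ≤ S.card := Finset.card_pos.mpr ⟨a0, ha0'⟩
    have hdet0 := haff.2.1
    interval_cases h : S.card
    · obtain ⟨a, rfl⟩ := Finset.card_eq_one.mp h
      rw [det_matSub_singleton, hd a] at hdet0
      exact absurd hdet0 (by norm_num)
    · obtain ⟨a, b, hab, rfl⟩ := Finset.card_eq_two.mp h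
      rw [det_matSub_pair _ _ _ hab, hd a, hd b] at hdet0
      exact ⟨a, b, hab, by omega⟩
end
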